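/- There exists a unique v in the closed ball of radius Q centered at 0 in E such that φˢ(φᵘ(v)) = v. Moreover this v satisfies ‖v‖ ≤ 10⁻²·Q, ‖φᵘ(v)‖ ≤ 10⁻²·Q, and ‖v‖ + ‖φᵘ(v)‖ ≤ Q/50. -/

import Mathlib

open NNReal

theorem stmt_2 {E F : Type*} [NormedAddCommGroup E] [NormedSpace ℝ E] [CompleteSpace E]
    [NormedAddCommGroup F] [NormedSpace ℝ F]
    (Q : ℝ) (hQ : 0 < Q) (L : ℝ≥0)
    (hL : (L : ℝ) ≤ (100 : ℝ)⁻¹ - (1000 : ℝ)⁻¹)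
    (φu : E → F) (φs : F → E)
    (hφuLip : LipschitzOnWith L φu (Metric.closedBall (0 : E) Q))
    (hφsLip : LipschitzOnWith L φs (Metric.closedBall (0 : F) Q))
    (hφu0 : ‖φu 0‖ ≤ (1000 : ℝ)⁻¹ * Q) (hφs0 : ‖φs 0‖ ≤ (1000 : ℝ)⁻¹ * Q) :
    ∃ v ∈ Metric.closedBall (0 : E) Q,
      φs (φu v) = v ∧
      ‖v‖ ≤ (100 : ℝ)⁻¹ * Q ∧ ‖φu v‖ ≤ (100 : ℝ)⁻¹ * Q ∧ ‖v‖ + ‖φu v‖ ≤ Q / 50 ∧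
      ∀ w ∈ Metric.closedBall (0 : E) Q, φs (φu w) = w → w = v := by
  have h0E : (0 : E) ∈ Metric.closedBall (0 : E) Q := Metric.mem_closedBall_self hQ.le
  have h0F : (0 : F) ∈ Metric.closedBall (0 : F) Q := Metric.mem_closedBall_self hQ.le
  have hL' : (L : ℝ) ≤ (100 : ℝ)⁻¹ := by linarith [hL]
  -- bound on φu on the ball
  have hu : ∀ x ∈ Metric.closedBall (0 : E) Q, ‖φu x‖ ≤ (100 : ℝ)⁻¹ * Q := by
    intro x hx
    have hd := hφuLip.dist_le_mul x hx 0 h0E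
    rw [dist_eq_norm, dist_eq_norm, sub_zero] at hd
    have hx' : ‖x‖ ≤ Q := by simpa [dist_eq_norm] using hx
    have hLx : (L : ℝ) * ‖x‖ ≤ (100 : ℝ)⁻¹ * Q - (1000 : ℝ)⁻¹ * Q := by
      calc (L : ℝ) * ‖x‖ ≤ ((100 : ℝ)⁻¹ - (1000 : ℝ)⁻¹) * Q :=
            mul_le_mul hL hx' (norm_nonneg _) (by norm_num)
        _ = (100 : ℝ)⁻¹ * Q - (1000 : ℝ)⁻¹ * Q := by ring
    calc ‖φu x‖ ≤ ‖φu x - φu 0‖ + ‖φu 0‖ := by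
          simpa using norm_add_le (φu x - φu 0) (φu 0)
      _ ≤ (L : ℝ) * ‖x‖ + (1000 : ℝ)⁻¹ * Q := add_le_add hd hφu0
      _ ≤ (100 : ℝ)⁻¹ * Q := by linarith
  have huQ : ∀ x ∈ Metric.closedBall (0 : E) Q, φu x ∈ Metric.closedBall (0 : F) Q := by
    intro x hx
    have := hu x hx
    simp only [Metric.mem_closedBall, dist_zero_right]
    nlinarith
  -- bound on f x = φs (φu x)
  have hs : ∀ x ∈ Metric.closedBall (0 : E) Q, ‖φs (φu x)‖ ≤ (100 : ℝ)⁻¹ * Q := by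
    intro x hx
    have hd := hφsLip.dist_le_mul (φu x) (huQ x hx) 0 h0F
    rw [dist_eq_norm, dist_eq_norm, sub_zero] at hd
    have h1 := hu x hx
    have hLx : (L : ℝ) * ‖φu x‖ ≤ (100 : ℝ)⁻¹ * ((100 : ℝ)⁻¹ * Q) :=
      mul_le_mul hL' h1 (norm_nonneg _) (by norm_num)
    calc ‖φs (φu x)‖ ≤ ‖φs (φu x) - φs 0‖ + ‖φs 0‖ := by
          simpa using norm_add_le (φs (φu x) - φs 0) (φs 0)
      _ ≤ (L : ℝ) * ‖φu x‖ + (1000 : ℝ)⁻¹ * Q := add_le_add hd hφs0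
      _ ≤ (100 : ℝ)⁻¹ * Q := by nlinarith
  set f : E → E := fun x => φs (φu x) with hf
  have hmaps : Set.MapsTo f (Metric.closedBall (0 : E) Q) (Metric.closedBall (0 : E) Q) := by
    intro x hx
    have := hs x hx
    simp only [Metric.mem_closedBall, dist_zero_right]
    nlinarith
  -- contraction on the ball
  have hcontr : ∀ x ∈ Metric.closedBall (0 : E) Q, ∀ y ∈ Metric.closedBall (0 : E) Q,
      dist (f x) (f y) ≤ (L : ℝ) * ((L : ℝ) * dist x y) := by
    intro x hx y hy
    calc dist (f x) (f y) ≤ (L : ℝ) * dist (φu x) (φu y) :=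
          hφsLip.dist_le_mul _ (huQ x hx) _ (huQ y hy)
      _ ≤ (L : ℝ) * ((L : ℝ) * dist x y) := by
          have := hφuLip.dist_le_mul x hx y hy
          exact mul_le_mul_of_nonneg_left this L.coe_nonneg
  have hK1 : L * L < 1 := by
    have : (L : ℝ) * (L : ℝ) < 1 := by nlinarith [L.coe_nonneg]
    exact_mod_cast this
  have hLip : LipschitzOnWith (L * L) f (Metric.closedBall (0 : E) Q) := by
    apply LipschitzOnWith.of_dist_le_mul
    intro x hx y hy
    calc dist (f x) (f y) ≤ (L : ℝ) * ((L : ℝ) * dist x y) := hcontr x hx y hy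
      _ = ((L * L : ℝ≥0) : ℝ) * dist x y := by push_cast; ring
  have hcw : ContractingWith (L * L) (hmaps.restrict f _ _) :=
    ⟨hK1, hLip.mapsToRestrict hmaps⟩
  obtain ⟨v, hvmem, hvfix, -, -⟩ :=
    hcw.exists_fixedPoint' (Metric.isClosed_closedBall.isComplete) hmaps h0E
      (edist_ne_top _ _)
  have hv' : ‖v‖ ≤ (100 : ℝ)⁻¹ * Q := hvfix ▸ hs v hvmem
  refine ⟨v, hvmem, hvfix, hv', hu v hvmem, ?_, ?_⟩
  · have := hu v hvmem
    nlinarith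
  · intro w hw hwfix
    by_contra hne
    have hd : dist w v ≤ (L : ℝ) * ((L : ℝ) * dist w v) := by
      have := hcontr w hw v hvmem
      rwa [show f w = w from hwfix, show f v = v from hvfix] at this
    have hdpos : 0 < dist w v := dist_pos.2 hne
    have hLL : (L : ℝ) * (L : ℝ) ≤ (100 : ℝ)⁻¹ * (100 : ℝ)⁻¹ :=
      mul_le_mul hL' hL' L.coe_nonneg (by norm_num)
    nlinarith [mul_le_mul_of_nonneg_right hLL (dist_nonneg (x := w) (y := v))]
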